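/- arXiv:1008.3364 — 2 statements merged into one kernel-verified Lean document; each statement's English description precedes it below -/
import Mathlib

section
/- There is exactly one function f ∈ 𝒮 such that f(z) = 1 + (z − 1) + o(|z − 1|³) as z →∠ 1, namely the identity function f(z) = z. In particular, if f ∈ 𝒮 and f(z) = z + o(|z − 1|³) as z →∠ 1, then f(z) = z for all z ∈ 𝔻. -/
open Complex Filter Matrix Metric Set Asymptotics
open scoped ComplexConjugate ComplexOrder Topology

noncomputable section

/-- The open unit disk in `ℂ`. -/
def unitDisk : Set ℂ := Metric.ball (0 : ℂ) 1

/-- The Schur class: functions analytic on the open unit disk, bounded by one in modulus there. -/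
def SchurClass : Set (ℂ → ℂ) :=
  {f | DifferentiableOn ℂ f unitDisk ∧ ∀ z ∈ unitDisk, ‖f z‖ ≤ 1}

/-- Stolz angle at a boundary point `t0` with aperture `κ`. -/
def stolzAngle (t0 : ℂ) (κ : ℝ) : Set ℂ :=
  {z ∈ unitDisk | ‖z - t0‖ < κ * (1 - ‖z‖)}

/-- `g z → L` as `z → t0` nontangentially. -/
def NTTendsto (g : ℂ → ℂ) (t0 L : ℂ) : Prop :=
  ∀ κ : ℝ, 1 < κ → Filter.Tendsto g (nhdsWithin t0 (stolzAngle t0 κ)) (nhds L)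

/-- The boundary derivative `f_j(t0)` exists and equals `s`. -/
def HasBDeriv (f : ℂ → ℂ) (t0 : ℂ) (j : ℕ) (s : ℂ) : Prop :=
  NTTendsto (fun z => iteratedDeriv j f z / (Nat.factorial j : ℂ)) t0 s

/-- `f` is a solution of the boundary interpolation problem `BP_N` with data `t0`, `s`. -/
def SolvesBP (t0 : ℂ) (s : ℕ → ℂ) (N : ℕ) (f : ℂ → ℂ) : Prop :=
  f ∈ SchurClass ∧ ∀ j ≤ N, HasBDeriv f t0 j (s j)

/-- `g = o(h)` as `z → t0` nontangentially. -/
def NTLittleO (g h : ℂ → ℂ) (t0 : ℂ) : Prop :=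
  ∀ κ : ℝ, 1 < κ → g =o[nhdsWithin t0 (stolzAngle t0 κ)] h

/-- restrictions to the unit disk of the solutions of `BP_N` -/
def solSet (t0 : ℂ) (s : ℕ → ℂ) (N : ℕ) : Set (unitDisk → ℂ) :=
  {g | ∃ f, SolvesBP t0 s N f ∧ g = unitDisk.restrict f}

/-- The (1-indexed) `(j, l)` entry of the structured matrix `Ψ_n(t0)`. -/
def PsiEntry (t0 : ℂ) (j l : ℕ) : ℂ :=
  if j ≤ l then (-1 : ℂ) ^ (l - 1) * ((l - 1).choose (j - 1) : ℂ) * t0 ^ (l + j - 1) else 0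

/-- The (1-indexed) entry `p^s_{ij}` of the structured matrix `ℙ^s_n = H^s_n Ψ_n(t0) (U^s_n)^*`. -/
def pEntry (t0 : ℂ) (s : ℕ → ℂ) (i j : ℕ) : ℂ :=
  ∑ r ∈ Finset.Icc 1 j,
    (∑ l ∈ Finset.Icc 1 r, s (i + l - 1) * PsiEntry t0 l r) * conj (s (j - r))

/-- The structured matrix `ℙ^s_n = H^s_n Ψ_n(t0) (U^s_n)^*`. -/
def Pmat (t0 : ℂ) (s : ℕ → ℂ) (n : ℕ) : Matrix (Fin n) (Fin n) ℂ :=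
  Matrix.of fun i j => pEntry t0 s ((i : ℕ) + 1) ((j : ℕ) + 1)

/-- The augmented `n × (n+1)` matrix `[ℙ^s_n  B_n]`. -/
def PmatAug (t0 : ℂ) (s : ℕ → ℂ) (n : ℕ) : Matrix (Fin n) (Fin (n + 1)) ℂ :=
  Matrix.of fun i j => pEntry t0 s ((i : ℕ) + 1) ((j : ℕ) + 1)

/-- The lower triangular Toeplitz matrix `U^s_n`. -/
def Umat (s : ℕ → ℂ) (n : ℕ) : Matrix (Fin n) (Fin n) ℂ :=
  Matrix.of fun i j => if (j : ℕ) ≤ (i : ℕ) then s ((i : ℕ) - (j : ℕ)) else 0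

/-- `f` coincides on the unit disk with a finite Blaschke product of degree `d`. -/
def IsBlaschke (f : ℂ → ℂ) (d : ℕ) : Prop :=
  ∃ (c : ℂ) (a : Fin d → ℂ), ‖c‖ = 1 ∧ (∀ k, a k ∈ unitDisk) ∧
    ∀ z ∈ unitDisk, f z = c * ∏ k, (z - a k) / (1 - conj (a k) * z)

/-- Wirtinger derivative `∂/∂z`. -/
def wdz (u : ℂ → ℂ) : ℂ → ℂ :=
  fun z => (fderiv ℝ u z 1 - Complex.I * fderiv ℝ u z Complex.I) / 2

/-- Wirtinger derivative `∂/∂z̄`. -/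
def wdzbar (u : ℂ → ℂ) : ℂ → ℂ :=
  fun z => (fderiv ℝ u z 1 + Complex.I * fderiv ℝ u z Complex.I) / 2

/-- The kernel `(1 - |f(z)|²)/(1 - |z|²)`, regarded as a complex-valued function. -/
def spKernel (f : ℂ → ℂ) : ℂ → ℂ :=
  fun z => (((1 - ‖f z‖ ^ 2) / (1 - ‖z‖ ^ 2) : ℝ) : ℂ)

/-- `∂^{i+j}/∂z^i ∂z̄^j [(1 - |f(z)|²)/(1 - |z|²)]`. -/
def spDeriv (f : ℂ → ℂ) (i j : ℕ) : ℂ → ℂ := wdz^[i] (wdzbar^[j] (spKernel f))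

/-- The Schwarz–Pick matrix `P^f_n(z)`. -/
def SchwarzPick (f : ℂ → ℂ) (n : ℕ) (z : ℂ) : Matrix (Fin n) (Fin n) ℂ :=
  Matrix.of fun i j =>
    (1 / ((Nat.factorial (i : ℕ) : ℂ) * (Nat.factorial (j : ℕ) : ℂ))) * spDeriv f i j z

/-- The class `𝒮^{(n)}(t0)` of Schur functions satisfying a higher order
Carathéodory–Julia condition at `t0`. -/
def SchurN (n : ℕ) (t0 : ℂ) : Set (ℂ → ℂ) :=
  {f | f ∈ SchurClass ∧
    Filter.liminf (fun z => ((spDeriv f (n - 1) (n - 1) z).re : EReal))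
      (nhdsWithin t0 unitDisk) < ⊤}

/-- The Jordan-type matrix `T` with diagonal `t0` and subdiagonal `1`. -/
def Tmat (t0 : ℂ) (n : ℕ) : Matrix (Fin n) (Fin n) ℂ :=
  Matrix.of fun i j =>
    if (i : ℕ) = (j : ℕ) then t0 else if (i : ℕ) = (j : ℕ) + 1 then 1 else 0

/-- The column `E = (1,0,…,0)ᵀ`. -/
def Evec (n : ℕ) : Matrix (Fin n) (Fin 1) ℂ :=
  Matrix.of fun i _ => if (i : ℕ) = 0 then 1 else 0

/-- The column `M = (s_0,…,s_{n−1})ᵀ`. -/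
def Mvec (s : ℕ → ℂ) (n : ℕ) : Matrix (Fin n) (Fin 1) ℂ :=
  Matrix.of fun i _ => s (i : ℕ)

/-- The matrix `P̃ = ℙ^s_n + M M^*`. -/
def Ptilde (t0 : ℂ) (s : ℕ → ℂ) (n : ℕ) : Matrix (Fin n) (Fin n) ℂ :=
  Pmat t0 s n + Mvec s n * (Mvec s n)ᴴ

/-- The resolvent-type matrix `(P̃ − z ℙ^s_n T^*)⁻¹`. -/
def resolv (t0 : ℂ) (s : ℕ → ℂ) (n : ℕ) (z : ℂ) : Matrix (Fin n) (Fin n) ℂ :=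
  (Ptilde t0 s n - z • (Pmat t0 s n * (Tmat t0 n)ᴴ))⁻¹

/-- `α = sqrt(1 − M^* P̃⁻¹ M)`. -/
def alphaC (t0 : ℂ) (s : ℕ → ℂ) (n : ℕ) : ℂ :=
  (Real.sqrt (1 - (((Mvec s n)ᴴ * (Ptilde t0 s n)⁻¹ * Mvec s n) 0 0).re) : ℝ)

/-- `β = sqrt(1 − E^* P̃⁻¹ E)`. -/
def betaC (t0 : ℂ) (s : ℕ → ℂ) (n : ℕ) : ℂ :=
  (Real.sqrt (1 - (((Evec n)ᴴ * (Ptilde t0 s n)⁻¹ * Evec n) 0 0).re) : ℝ)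

/-- The rational function `a`. -/
def afun (t0 : ℂ) (s : ℕ → ℂ) (n : ℕ) (z : ℂ) : ℂ :=
  ((Evec n)ᴴ * resolv t0 s n z * Mvec s n) 0 0

/-- The rational function `b`. -/
def bfun (t0 : ℂ) (s : ℕ → ℂ) (n : ℕ) (z : ℂ) : ℂ :=
  betaC t0 s n * (1 - z * ((Evec n)ᴴ * resolv t0 s n z * (Tmat t0 n)⁻¹ * Evec n) 0 0)

/-- The rational function `c`. -/
def cfun (t0 : ℂ) (s : ℕ → ℂ) (n : ℕ) (z : ℂ) : ℂ :=
  alphaC t0 s n * (1 - z * ((Mvec s n)ᴴ * (Tmat t0 n)ᴴ * resolv t0 s n z * Mvec s n) 0 0)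

/-- The rational function `d`. -/
def dfun (t0 : ℂ) (s : ℕ → ℂ) (n : ℕ) (z : ℂ) : ℂ :=
  z * alphaC t0 s n * betaC t0 s n *
    ((Mvec s n)ᴴ * (Pmat t0 s n)⁻¹ * Ptilde t0 s n * resolv t0 s n z * (Tmat t0 n)⁻¹ *
      Evec n) 0 0

/-- Taylor coefficient of `g` at `t0`: `g_j(t0) = g^{(j)}(t0)/j!`. -/
def tcoef (g : ℂ → ℂ) (t0 : ℂ) (j : ℕ) : ℂ :=
  iteratedDeriv j g t0 / (Nat.factorial j : ℂ)

noncomputable def mob (a z : ℂ) : ℂ := (z - a) / (1 - conj a * z)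

lemma normSq_key (a z : ℂ) :
    Complex.normSq (1 - conj a * z) - Complex.normSq (z - a)
      = (1 - Complex.normSq a) * (1 - Complex.normSq z) := by
  simp only [Complex.normSq_apply, Complex.sub_re, Complex.sub_im, Complex.mul_re,
    Complex.mul_im, Complex.one_re, Complex.one_im, Complex.conj_re, Complex.conj_im]
  ring

lemma normSq_lt_one_iff {z : ℂ} : Complex.normSq z < 1 ↔ norm z < 1 := by
  rw [← Complex.sq_norm]
  constructor
  · intro h; nlinarith [norm_nonneg z]
  · intro h; nlinarith [norm_nonneg z]

lemma abs_lt_abs {x y : ℂ} (h : Complex.normSq x < Complex.normSq y) :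
    norm x < norm y := by
  rw [Complex.norm_def, Complex.norm_def]
  exact Real.sqrt_lt_sqrt (Complex.normSq_nonneg x) h

lemma mob_den_ne {a z : ℂ} (ha : norm a < 1) (hz : norm z < 1) :
    (1 : ℂ) - conj a * z ≠ 0 := by
  intro h
  have h1 : conj a * z = 1 := by linear_combination -h
  have := congrArg norm h1
  rw [norm_mul, Complex.norm_conj, norm_one] at this
  nlinarith [norm_nonneg a, norm_nonneg z]

lemma mob_lt_one {a z : ℂ} (ha : norm a < 1) (hz : norm z < 1) :
    norm (mob a z) < 1 := by
  have hden := mob_den_ne ha hz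
  have h1 : Complex.normSq (z - a) < Complex.normSq (1 - conj a * z) := by
    have := normSq_key a z
    have h2 : 0 < (1 - Complex.normSq a) * (1 - Complex.normSq z) := by
      have := normSq_lt_one_iff.2 ha
      have := normSq_lt_one_iff.2 hz
      nlinarith
    linarith
  have : norm (z - a) < norm (1 - conj a * z) := abs_lt_abs h1
  rw [mob, norm_div, div_lt_one ((norm_pos_iff).2 hden)]
  exact this

lemma mob_self (a : ℂ) : mob a a = 0 := by simp [mob]

lemma mob_mob {a z : ℂ} (ha : norm a < 1) (hz : norm z < 1) :
    mob (-a) (mob a z) = z := by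
  have hden := mob_den_ne ha hz
  have hnsa : Complex.normSq a < 1 := normSq_lt_one_iff.2 ha
  have h1 : (1 : ℂ) - Complex.normSq a ≠ 0 := by
    intro h
    have : (Complex.normSq a : ℂ) = 1 := by linear_combination -h
    rw [Complex.ofReal_eq_one] at this; linarith [this ▸ hnsa]
  have hca : conj a * a = (Complex.normSq a : ℂ) := (Complex.normSq_eq_conj_mul_self).symm
  rw [mob, mob]
  rw [map_neg, sub_neg_eq_add, neg_mul, sub_neg_eq_add]
  have e1 : (1 : ℂ) + conj a * ((z - a) / (1 - conj a * z))
      = (1 - (Complex.normSq a : ℂ)) / (1 - conj a * z) := by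
    rw [mul_div_assoc', add_div' _ _ _ hden, div_eq_div_iff hden hden]
    linear_combination (-(1 - conj a * z)) * hca
  have e2 : (z - a) / (1 - conj a * z) + a
      = (z * (1 - (Complex.normSq a : ℂ))) / (1 - conj a * z) := by
    rw [div_add' _ _ _ hden, div_eq_div_iff hden hden]
    linear_combination (-(z * (1 - conj a * z))) * hca
  rw [e1, e2, div_div_div_eq, div_eq_iff (mul_ne_zero hden h1)]
  ring

lemma mob_differentiableAt {a z : ℂ} (h : (1 : ℂ) - conj a * z ≠ 0) :
    DifferentiableAt ℂ (mob a) z := by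
  apply DifferentiableAt.div
  · exact differentiableAt_id.sub_const a
  · exact (differentiableAt_const _).sub ((differentiableAt_const _).mul differentiableAt_id)
  · exact h

lemma schwarz_pick {f : ℂ → ℂ} (hd : DifferentiableOn ℂ f (ball 0 1))
    (hm : MapsTo f (ball 0 1) (ball 0 1)) {a z : ℂ}
    (ha : norm a < 1) (hz : norm z < 1) :
    norm (mob (f a) (f z)) ≤ norm (mob a z) := by
  have hmem : ∀ w : ℂ, norm w < 1 ↔ w ∈ ball (0 : ℂ) 1 := by
    intro w; rw [mem_ball_zero_iff]
  have hfa : norm (f a) < 1 := by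
    rw [hmem]; exact hm ((hmem a).1 ha)
  set g : ℂ → ℂ := fun w => mob (f a) (f (mob (-a) w)) with hg
  have hga : norm (-a) < 1 := by rwa [norm_neg]
  have hgd : DifferentiableOn ℂ g (ball 0 1) := by
    intro w hw
    have hw' : norm w < 1 := (hmem w).2 hw
    have h1 : norm (mob (-a) w) < 1 := mob_lt_one hga hw'
    have h2 : norm (f (mob (-a) w)) < 1 := by
      rw [hmem]; exact hm ((hmem _).1 h1)
    have d1 : DifferentiableAt ℂ (mob (-a)) w := mob_differentiableAt (mob_den_ne hga hw')
    have d2 : DifferentiableAt ℂ f (mob (-a) w) :=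
      hd.differentiableAt (isOpen_ball.mem_nhds ((hmem _).1 h1))
    have d3 : DifferentiableAt ℂ (mob (f a)) (f (mob (-a) w)) :=
      mob_differentiableAt (mob_den_ne hfa h2)
    exact ((d3.comp _ d2).comp _ d1).differentiableWithinAt
  have hgm : MapsTo g (ball 0 1) (ball 0 1) := by
    intro w hw
    have hw' : norm w < 1 := (hmem w).2 hw
    have h1 : norm (mob (-a) w) < 1 := mob_lt_one hga hw'
    have h2 : norm (f (mob (-a) w)) < 1 := by
      rw [hmem]; exact hm ((hmem _).1 h1)
    exact (hmem _).1 (mob_lt_one hfa h2)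
  have hg0 : g 0 = 0 := by
    have : mob (-a) 0 = a := by simp [mob]
    rw [hg]; simp only [this, mob_self]
  have key := Complex.norm_le_norm_of_mapsTo_ball_self hgd (hgm.mono_right ball_subset_closedBall) hg0 (mob_lt_one ha hz)
  have : g (mob a z) = mob (f a) (f z) := by rw [hg]; simp only [mob_mob ha hz]
  rwa [this] at key

lemma star_ineq {f : ℂ → ℂ} (hd : DifferentiableOn ℂ f (ball 0 1))
    (hm : MapsTo f (ball 0 1) (ball 0 1)) {a z : ℂ}
    (ha : norm a < 1) (hz : norm z < 1)
    (hfa : norm (f a) < 1) (hfz : norm (f z) < 1) :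
    (1 - Complex.normSq a) * (1 - Complex.normSq z)
        * Complex.normSq (1 - conj (f a) * f z)
      ≤ (1 - Complex.normSq (f a)) * (1 - Complex.normSq (f z))
        * Complex.normSq (1 - conj a * z) := by
  have hsp := schwarz_pick hd hm ha hz
  have hB : 0 < Complex.normSq (1 - conj a * z) :=
    Complex.normSq_pos.2 (mob_den_ne ha hz)
  have hB' : 0 < Complex.normSq (1 - conj (f a) * f z) :=
    Complex.normSq_pos.2 (mob_den_ne hfa hfz)
  have hsq : Complex.normSq (mob (f a) (f z)) ≤ Complex.normSq (mob a z) := by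
    rw [← Complex.sq_norm, ← Complex.sq_norm]
    exact pow_le_pow_left₀ (norm_nonneg _) hsp 2
  rw [mob, mob, Complex.normSq_div, Complex.normSq_div] at hsq
  have h1 : Complex.normSq (f z - f a) * Complex.normSq (1 - conj a * z)
      ≤ Complex.normSq (z - a) * Complex.normSq (1 - conj (f a) * f z) :=
    (div_le_div_iff₀ hB' hB).1 hsq
  have k1 := normSq_key a z
  have k2 := normSq_key (f a) (f z)
  nlinarith [h1, hB, hB']

lemma cayley_re {w : ℂ} (h : w ≠ 1) :
    ((1 + w) / (1 - w)).re = (1 - Complex.normSq w) / Complex.normSq (1 - w) := by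
  rw [Complex.div_re]
  simp only [Complex.add_re, Complex.add_im, Complex.sub_re, Complex.sub_im,
    Complex.one_re, Complex.one_im, Complex.normSq_apply]
  have hs : Complex.normSq (1 - w) ≠ 0 := (Complex.normSq_pos.2 (sub_ne_zero.2 h.symm)).ne'
  rw [Complex.normSq_apply] at hs
  simp only [Complex.sub_re, Complex.sub_im, Complex.one_re, Complex.one_im] at hs
  field_simp
  ring

lemma normSq_phi (w a : ℂ) :
    Complex.normSq (w + conj a) - Complex.normSq (w - a) = 4 * a.re * w.re := by
  simp only [Complex.normSq_apply, Complex.add_re, Complex.add_im, Complex.sub_re,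
    Complex.sub_im, Complex.conj_re, Complex.conj_im]
  ring

lemma rigidity {f : ℂ → ℂ} (hd : DifferentiableOn ℂ f (ball 0 1))
    (hb : ∀ z ∈ ball (0:ℂ) 1, norm (f z) ≤ 1)
    {x : ℕ → ℝ} (hx0 : ∀ n, 0 ≤ x n) (hx1 : ∀ n, x n < 1)
    (hxt : Filter.Tendsto x Filter.atTop (𝓝 1))
    (T1 : Filter.Tendsto (fun n => (f ((x n : ℂ)) - (x n : ℂ)) / ((x n : ℂ) - 1) ^ 3)
      Filter.atTop (𝓝 0)) :
    ∀ z ∈ ball (0:ℂ) 1, f z = z := by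
  set xc : ℕ → ℂ := fun n => ((x n : ℝ) : ℂ) with hxcdef
  have hmem : ∀ w : ℂ, norm w < 1 ↔ w ∈ ball (0 : ℂ) 1 := fun w => by
    rw [mem_ball_zero_iff]
  have hxcm : ∀ n, norm (xc n) < 1 := fun n => by
    simp only [hxcdef, Complex.norm_real, Real.norm_eq_abs]
    rw [_root_.abs_of_nonneg (hx0 n)]; exact hx1 n
  have hxcd : ∀ n, xc n - 1 ≠ 0 := fun n => by
    simp only [hxcdef]
    intro h
    have h2 : (x n : ℂ) = 1 := by linear_combination h
    rw [Complex.ofReal_eq_one] at h2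
    linarith [hx1 n, h2.le]
  have hxct : Tendsto xc atTop (𝓝 1) := by
    have := (Complex.continuous_ofReal.tendsto (1:ℝ)).comp hxt
    simpa [Function.comp_def] using this
  have hcube : Tendsto (fun n => (xc n - 1) ^ 3) atTop (𝓝 0) := by
    have := (hxct.sub_const 1).pow 3
    simpa using this
  have hsq2 : Tendsto (fun n => (xc n - 1) ^ 2) atTop (𝓝 0) := by
    have := (hxct.sub_const 1).pow 2
    simpa using this
  have T2 : Tendsto (fun n => f (xc n) - xc n) atTop (𝓝 0) := by
    have h := T1.mul hcube
    rw [zero_mul] at h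
    refine h.congr fun n => ?_
    simp only [hxcdef]
    have hne : ((x n : ℂ)) - 1 ≠ 0 := hxcd n
    field_simp
  have T5 : Tendsto (fun n => f (xc n)) atTop (𝓝 1) := by
    have := T2.add hxct
    simpa using this
  have T3 : Tendsto (fun n => (f (xc n) - xc n) / (1 - xc n)) atTop (𝓝 0) := by
    have h := (T1.mul hsq2).neg
    rw [zero_mul, neg_zero] at h
    refine h.congr fun n => ?_
    simp only [hxcdef]
    have hne : ((x n : ℂ)) - 1 ≠ 0 := hxcd n
    have hne' : (1 : ℂ) - (x n : ℂ) ≠ 0 := fun h => hne (by linear_combination -h)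
    field_simp
    ring
  have Treal : Tendsto (fun n => norm (f (xc n) - xc n) / (1 - x n)) atTop (𝓝 0) := by
    have h := (continuous_norm.tendsto 0).comp T3
    rw [norm_zero] at h
    refine h.congr fun n => ?_
    simp only [Function.comp_apply, norm_div]
    congr 1
    rw [show (1:ℂ) - xc n = ((1 - x n : ℝ) : ℂ) by simp [hxcdef]]
    rw [Complex.norm_real, Real.norm_eq_abs, _root_.abs_of_nonneg (by linarith [hx1 n])]
  have hfo : ∀ z ∈ ball (0:ℂ) 1, norm (f z) < 1 := by
    by_contra hc
    push_neg at hc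
    obtain ⟨z₀, hz₀, hz₀1⟩ := hc
    have heq : norm (f z₀) = 1 := le_antisymm (hb z₀ hz₀) hz₀1
    have hmax : IsMaxOn (norm ∘ f) (ball (0:ℂ) 1) z₀ := by
      intro z hz
      simp only [Function.comp_apply, Set.mem_setOf_eq, heq]
      exact hb z hz
    have hconst := Complex.eqOn_of_isPreconnected_of_isMaxOn_norm
      (convex_ball (0:ℂ) 1).isPreconnected isOpen_ball hd hz₀ hmax
    have hfz₀ : f z₀ = 1 := by
      have h1 : Tendsto (fun n => f (xc n)) atTop (𝓝 (f z₀)) := by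
        have h2 : (fun n => f (xc n)) = fun _ => f z₀ :=
          funext fun n => hconst ((hmem _).1 (hxcm n))
        rw [h2]; exact tendsto_const_nhds
      exact tendsto_nhds_unique h1 T5
    have hT1' : Tendsto (fun n => norm ((f (xc n) - xc n) / ((xc n) - 1) ^ 3))
        atTop (𝓝 0) := by
      have h := (continuous_norm.tendsto 0).comp T1
      rw [norm_zero] at h
      exact h.congr fun n => by simp only [Function.comp_apply, hxcdef]
    have hbig : ∀ n, (1:ℝ) ≤ norm ((f (xc n) - xc n) / ((xc n) - 1) ^ 3) := by
      intro n
      have hfx : f (xc n) = 1 := by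
        rw [hconst ((hmem _).1 (hxcm n))]; exact hfz₀
      have habs1 : norm (f (xc n) - xc n) = 1 - x n := by
        rw [hfx, show (1:ℂ) - xc n = ((1 - x n : ℝ) : ℂ) by simp [hxcdef]]
        rw [Complex.norm_real, Real.norm_eq_abs, _root_.abs_of_nonneg (by linarith [hx1 n])]
      have habs2 : norm ((xc n) - 1) = 1 - x n := by
        rw [show xc n - 1 = ((x n - 1 : ℝ) : ℂ) by simp [hxcdef]]
        rw [Complex.norm_real, Real.norm_eq_abs, abs_sub_comm, _root_.abs_of_nonneg (by linarith [hx1 n])]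
      rw [norm_div, norm_pow, habs1, habs2]
      have h1x : 0 < 1 - x n := by linarith [hx1 n]
      rw [le_div_iff₀ (by positivity)]
      have hcub : (1 - x n)^3 ≤ 1 - x n := by
        nlinarith [mul_nonneg (mul_nonneg h1x.le (hx0 n))
          (show (0:ℝ) ≤ 2 - x n by linarith [hx1 n])]
      linarith
    have := ge_of_tendsto' hT1' hbig
    linarith
  have hmaps : MapsTo f (ball (0:ℂ) 1) (ball (0:ℂ) 1) := fun z hz => (hmem _).1 (hfo z hz)
  have hfz1 : ∀ z ∈ ball (0:ℂ) 1, f z ≠ 1 := by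
    intro z hz h
    have h2 := hfo z hz
    rw [h] at h2; simp at h2
  have hz1 : ∀ z ∈ ball (0:ℂ) 1, z ≠ (1:ℂ) := by
    intro z hz h
    have h2 : norm z < 1 := (hmem z).2 hz
    rw [h] at h2; simp at h2
  have hble : ∀ n, norm (f (xc n)) ≤ 1 := fun n => hb _ ((hmem _).1 (hxcm n))
  have T4 : Tendsto (fun n => (1 - Complex.normSq (f (xc n))) / (1 - Complex.normSq (xc n)))
      atTop (𝓝 1) := by
    have key : ∀ n, |(1 - Complex.normSq (f (xc n))) / (1 - Complex.normSq (xc n)) - 1|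
        ≤ 2 * (norm (f (xc n) - xc n) / (1 - x n)) := by
      intro n
      set u := norm (f (xc n)) with hu
      set ε := norm (f (xc n) - xc n) with hε
      have hr1 : x n < 1 := hx1 n
      have hden : (0:ℝ) < 1 - (x n)^2 := by nlinarith [hx0 n]
      have hnsx : Complex.normSq (xc n) = (x n)^2 := by
        simp only [hxcdef, Complex.normSq_ofReal]; ring
      have hnsf : Complex.normSq (f (xc n)) = u^2 := (Complex.sq_norm _).symm
      have hdiff : |u - x n| ≤ ε := by
        have h1 := abs_norm_sub_norm_le (f (xc n)) (xc n)
        have h2 : norm (xc n) = x n := by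
          simp only [hxcdef, Complex.norm_real, Real.norm_eq_abs]; exact _root_.abs_of_nonneg (hx0 n)
        rwa [h2] at h1
      have hεnn : 0 ≤ ε := norm_nonneg _
      have hunn : 0 ≤ u := norm_nonneg _
      rw [hnsx, hnsf]
      have habs : |(1 - u^2)/(1 - (x n)^2) - 1| = |(x n)^2 - u^2| / (1 - (x n)^2) := by
        rw [div_sub_one hden.ne', abs_div, _root_.abs_of_pos hden]
        congr 1
        rw [show 1 - u^2 - (1 - (x n)^2) = (x n)^2 - u^2 by ring]
      rw [habs]
      have h2 : |(x n)^2 - u^2| ≤ 2 * ε := by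
        rw [show (x n)^2 - u^2 = (x n - u) * (x n + u) by ring, abs_mul]
        have h3 : |x n + u| ≤ 2 := by
          rw [_root_.abs_of_nonneg (by linarith [hx0 n])]
          linarith [hble n]
        have h4 : |x n - u| ≤ ε := by rw [abs_sub_comm]; exact hdiff
        calc |x n - u| * |x n + u| ≤ ε * 2 :=
              mul_le_mul h4 h3 (abs_nonneg _) hεnn
          _ = 2 * ε := by ring
      calc |(x n)^2 - u^2| / (1 - (x n)^2) ≤ (2*ε) / (1 - x n) := by
            apply div_le_div₀ (by positivity) h2 (by linarith) (by nlinarith [hx0 n])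
        _ = 2 * (ε / (1 - x n)) := by ring
    have h0 : Tendsto (fun n => (1 - Complex.normSq (f (xc n))) / (1 - Complex.normSq (xc n)) - 1)
        atTop (𝓝 0) := by
      apply squeeze_zero_norm (fun n => ?_) (by simpa using Treal.const_mul 2)
      rw [Real.norm_eq_abs]
      exact key n
    have := h0.add_const 1
    simpa using this
  have hjulia : ∀ z ∈ ball (0:ℂ) 1, (1 - Complex.normSq z) * Complex.normSq (1 - f z)
      ≤ (1 - Complex.normSq (f z)) * Complex.normSq (1 - z) := by
    intro z hz
    have hza : norm z < 1 := (hmem z).2 hz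
    have hfz : norm (f z) < 1 := hfo z hz
    have hstar : ∀ n, (1 - Complex.normSq z) * Complex.normSq (1 - conj (f (xc n)) * f z)
        ≤ ((1 - Complex.normSq (f (xc n))) / (1 - Complex.normSq (xc n)))
          * ((1 - Complex.normSq (f z)) * Complex.normSq (1 - conj (xc n) * z)) := by
      intro n
      have h := star_ineq hd hmaps (hxcm n) hza (hfo _ ((hmem _).1 (hxcm n))) hfz
      have hpos : 0 < 1 - Complex.normSq (xc n) := by
        have := normSq_lt_one_iff.2 (hxcm n); linarith
      rw [div_mul_eq_mul_div, le_div_iff₀ hpos]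
      nlinarith [h]
    have hconjT5 : Tendsto (fun n => conj (f (xc n))) atTop (𝓝 1) := by
      have h1 := (Complex.continuous_conj.tendsto 1).comp T5
      simpa [Function.comp_def] using h1
    have hconjxc : Tendsto (fun n => conj (xc n)) atTop (𝓝 1) := by
      have h1 := (Complex.continuous_conj.tendsto 1).comp hxct
      simpa [Function.comp_def] using h1
    have hL : Tendsto (fun n => (1 - Complex.normSq z) * Complex.normSq (1 - conj (f (xc n)) * f z))
        atTop (𝓝 ((1 - Complex.normSq z) * Complex.normSq (1 - f z))) := by
      have hc : Tendsto (fun n => 1 - conj (f (xc n)) * f z) atTop (𝓝 (1 - f z)) := by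
        have h1 : Tendsto (fun n => conj (f (xc n)) * f z) atTop (𝓝 (1 * f z)) :=
          hconjT5.mul tendsto_const_nhds
        have h2 := h1.const_sub (1:ℂ)
        simpa using h2
      exact tendsto_const_nhds.mul ((Complex.continuous_normSq.tendsto _).comp hc)
    have hR : Tendsto (fun n => ((1 - Complex.normSq (f (xc n))) / (1 - Complex.normSq (xc n)))
          * ((1 - Complex.normSq (f z)) * Complex.normSq (1 - conj (xc n) * z)))
        atTop (𝓝 (1 * ((1 - Complex.normSq (f z)) * Complex.normSq (1 - z)))) := by
      apply T4.mul
      have hc : Tendsto (fun n => 1 - conj (xc n) * z) atTop (𝓝 (1 - z)) := by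
        have h1 : Tendsto (fun n => conj (xc n) * z) atTop (𝓝 (1 * z)) :=
          hconjxc.mul tendsto_const_nhds
        have h2 := h1.const_sub (1:ℂ)
        simpa using h2
      exact tendsto_const_nhds.mul ((Complex.continuous_normSq.tendsto _).comp hc)
    have := le_of_tendsto_of_tendsto' hL hR hstar
    simpa using this
  set p : ℂ → ℂ := fun z => (1 + f z)/(1 - f z) - (1 + z)/(1 - z) with hpdef
  have hfne : ∀ z ∈ ball (0:ℂ) 1, (1:ℂ) - f z ≠ 0 := fun z hz =>
    sub_ne_zero.2 fun h => hfz1 z hz h.symm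
  have hzne : ∀ z ∈ ball (0:ℂ) 1, (1:ℂ) - z ≠ 0 := fun z hz =>
    sub_ne_zero.2 fun h => hz1 z hz h.symm
  have hre : ∀ z ∈ ball (0:ℂ) 1, 0 ≤ (p z).re := by
    intro z hz
    have e1 := cayley_re (hfz1 z hz)
    have e2 := cayley_re (hz1 z hz)
    have hrw : (p z).re = (1 - Complex.normSq (f z))/Complex.normSq (1 - f z)
        - (1 - Complex.normSq z)/Complex.normSq (1 - z) := by
      rw [hpdef]; simp only [Complex.sub_re]; rw [e1, e2]
    rw [hrw, sub_nonneg,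
      div_le_div_iff₀ (Complex.normSq_pos.2 (hzne z hz)) (Complex.normSq_pos.2 (hfne z hz))]
    exact hjulia z hz
  have hpd : DifferentiableOn ℂ p (ball (0:ℂ) 1) := by
    intro z hz
    have hfd : DifferentiableAt ℂ f z := hd.differentiableAt (isOpen_ball.mem_nhds hz)
    have d1 : DifferentiableAt ℂ (fun w => (1 + f w)/(1 - f w)) z :=
      ((differentiableAt_const _).add hfd).div ((differentiableAt_const _).sub hfd) (hfne z hz)
    have d2 : DifferentiableAt ℂ (fun w : ℂ => (1 + w)/(1 - w)) z :=
      ((differentiableAt_const _).add differentiableAt_id).div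
        ((differentiableAt_const _).sub differentiableAt_id) (hzne z hz)
    exact (d1.sub d2).differentiableWithinAt
  have hpid : ∀ z ∈ ball (0:ℂ) 1, p z = 2 * (f z - z) / ((1 - f z) * (1 - z)) := by
    intro z hz
    rw [hpdef]
    have h1 := hfne z hz
    have h2 := hzne z hz
    field_simp
    ring
  have hp0seq : Tendsto (fun n => p (xc n) / (1 - xc n)) atTop (𝓝 0) := by
    have hq : Tendsto (fun n => (1 - f (xc n))/(1 - xc n)) atTop (𝓝 1) := by
      have h := T3.const_sub (1:ℂ)
      rw [sub_zero] at h
      refine h.congr fun n => ?_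
      have hne := hzne (xc n) ((hmem _).1 (hxcm n))
      field_simp
      ring
    have hqi : Tendsto (fun n => (1 - xc n)/(1 - f (xc n))) atTop (𝓝 1) := by
      have h := hq.inv₀ one_ne_zero
      rw [inv_one] at h
      refine h.congr fun n => ?_
      rw [inv_div]
    have h := (T1.mul hqi).const_mul (-2 : ℂ)
    rw [zero_mul, mul_zero] at h
    refine h.congr fun n => ?_
    have hmm := (hmem _).1 (hxcm n)
    have hne1 : ((x n : ℂ)) - 1 ≠ 0 := hxcd n
    have hne2 := hfne (xc n) hmm
    have hne3 := hzne (xc n) hmm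
    rw [hpid (xc n) hmm]
    simp only [hxcdef] at hne2 hne3 ⊢
    field_simp
    ring
  have hpabs : Tendsto (fun n => norm (p (xc n)) / (1 - x n)) atTop (𝓝 0) := by
    have h := (continuous_norm.tendsto 0).comp hp0seq
    rw [norm_zero] at h
    refine h.congr fun n => ?_
    simp only [Function.comp_apply, norm_div]
    congr 1
    rw [show (1:ℂ) - xc n = ((1 - x n : ℝ) : ℂ) by simp [hxcdef]]
    rw [Complex.norm_real, Real.norm_eq_abs, _root_.abs_of_nonneg (by linarith [hx1 n])]
  have hp0 : Tendsto (fun n => p (xc n)) atTop (𝓝 0) := by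
    have hl : Tendsto (fun n => 1 - xc n) atTop (𝓝 0) := by
      have := hxct.const_sub (1:ℂ)
      simpa using this
    have h := hp0seq.mul hl
    rw [zero_mul] at h
    refine h.congr fun n => ?_
    exact div_mul_cancel₀ _ (hzne (xc n) ((hmem _).1 (hxcm n)))
  have hpzero : ∀ z ∈ ball (0:ℂ) 1, p z = 0 := by
    by_cases hcase : ∀ z ∈ ball (0:ℂ) 1, 0 < (p z).re
    · exfalso
      set a := p 0 with hadef
      have h0mem : (0:ℂ) ∈ ball (0:ℂ) 1 := by simp
      have ha : 0 < a.re := hcase 0 h0mem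
      have hden2 : ∀ z ∈ ball (0:ℂ) 1, p z + conj a ≠ 0 := by
        intro z hz h
        have h1 : (p z + conj a).re = (p z).re + a.re := by
          simp [Complex.add_re, Complex.conj_re]
        rw [h] at h1
        simp only [Complex.zero_re] at h1
        nlinarith [hcase z hz]
      set φ : ℂ → ℂ := fun z => (p z - a)/(p z + conj a) with hφdef
      have hφd : DifferentiableOn ℂ φ (ball 0 1) := fun z hz =>
        ((hpd z hz).sub (differentiableWithinAt_const a)).div
          ((hpd z hz).add (differentiableWithinAt_const (conj a))) (hden2 z hz)
      have hφm : MapsTo φ (ball 0 1) (ball 0 1) := by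
        intro z hz
        rw [← hmem, hφdef]
        simp only
        rw [norm_div, div_lt_one ((norm_pos_iff).2 (hden2 z hz))]
        apply abs_lt_abs
        have h1 := normSq_phi (p z) a
        nlinarith [hcase z hz, ha]
      have hφ0 : φ 0 = 0 := by
        rw [hφdef]; simp [← hadef]
      have hkey : ∀ n, norm a * (1 - x n) ≤ 2 * norm (p (xc n)) := by
        intro n
        have hmm := (hmem _).1 (hxcm n)
        have hs := Complex.norm_le_norm_of_mapsTo_ball_self hφd (hφm.mono_right ball_subset_closedBall) hφ0 (hxcm n)
        rw [hφdef] at hs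
        simp only at hs
        rw [norm_div, div_le_iff₀ ((norm_pos_iff).2 (hden2 _ hmm))] at hs
        have habsxc : norm (xc n) = x n := by
          simp only [hxcdef, Complex.norm_real, Real.norm_eq_abs]; exact _root_.abs_of_nonneg (hx0 n)
        rw [habsxc] at hs
        have t1 : norm a - norm (p (xc n)) ≤ norm (p (xc n) - a) := by
          have h1 := abs_norm_sub_norm_le a (p (xc n))
          have h2 := norm_sub_rev a (p (xc n))
          calc norm a - norm (p (xc n))
              ≤ |norm a - norm (p (xc n))| := le_abs_self _
            _ ≤ norm (a - p (xc n)) := h1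
            _ = norm (p (xc n) - a) := h2
        have t2 : norm (p (xc n) + conj a) ≤ norm (p (xc n)) + norm a := by
          calc norm (p (xc n) + conj a)
              ≤ norm (p (xc n)) + norm (conj a) := norm_add_le _ _
            _ = norm (p (xc n)) + norm a := by rw [Complex.norm_conj]
        nlinarith [hx0 n, hx1 n, norm_nonneg (p (xc n)), norm_nonneg a]
      have habs0 : norm a ≤ 0 := by
        have hlim : Tendsto (fun n => 2 * (norm (p (xc n))/(1 - x n))) atTop (𝓝 0) := by
          simpa using hpabs.const_mul 2
        apply ge_of_tendsto' hlim
        intro n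
        have h1x : 0 < 1 - x n := by linarith [hx1 n]
        rw [mul_div_assoc', le_div_iff₀ h1x]
        exact hkey n
      have ha0 : a = 0 := by
        have := le_antisymm habs0 (norm_nonneg a)
        exact norm_eq_zero.1 this
      rw [ha0] at ha
      simp at ha
    · push_neg at hcase
      obtain ⟨z₀, hz₀, hz₀re⟩ := hcase
      have hz₀re0 : (p z₀).re = 0 := le_antisymm hz₀re (hre z₀ hz₀)
      set g : ℂ → ℂ := fun z => Complex.exp (-p z) with hgdef
      have hgd : DifferentiableOn ℂ g (ball 0 1) := fun z hz => ((hpd z hz).neg).cexp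
      have hmax : IsMaxOn (norm ∘ g) (ball (0:ℂ) 1) z₀ := by
        intro z hz
        simp only [Function.comp_apply, hgdef, Complex.norm_exp,
          Complex.neg_re, Set.mem_setOf_eq, hz₀re0, neg_zero, Real.exp_zero]
        calc Real.exp (-(p z).re) ≤ Real.exp 0 :=
              Real.exp_le_exp.2 (by linarith [hre z hz])
          _ = 1 := Real.exp_zero
      have hconst := Complex.eqOn_of_isPreconnected_of_isMaxOn_norm
        (convex_ball (0:ℂ) 1).isPreconnected isOpen_ball hgd hz₀ hmax
      have hre0 : ∀ z ∈ ball (0:ℂ) 1, (p z).re = 0 := by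
        intro z hz
        have h1 : norm (g z) = norm (g z₀) := by
          rw [hconst hz]; rfl
        rw [hgdef] at h1
        simp only [Complex.norm_exp, Complex.neg_re] at h1
        have h2 := Real.exp_injective h1
        rw [hz₀re0] at h2
        linarith [h2]
      have hpa : AnalyticOnNhd ℂ p (ball (0:ℂ) 1) := hpd.analyticOnNhd isOpen_ball
      rcases hpa.is_constant_or_isOpen (convex_ball (0:ℂ) 1).isPreconnected with ⟨v, hv⟩ | hopen
      · have hveq : (fun n => p (xc n)) = fun _ => v :=
          funext fun n => hv _ ((hmem _).1 (hxcm n))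
        have hv0 : v = 0 := by
          apply tendsto_nhds_unique _ hp0
          rw [hveq]
          exact tendsto_const_nhds
        intro z hz
        rw [hv z hz, hv0]
      · exfalso
        have himg : IsOpen (p '' ball 0 1) := hopen _ subset_rfl isOpen_ball
        have hmem0 : p 0 ∈ p '' ball (0:ℂ) 1 := ⟨0, by simp, rfl⟩
        obtain ⟨ε, hε, hball⟩ := Metric.isOpen_iff.1 himg _ hmem0
        have hw : p 0 + ((ε/2 : ℝ) : ℂ) ∈ p '' ball (0:ℂ) 1 := by
          apply hball
          rw [mem_ball, Complex.dist_eq]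
          have : p 0 + ((ε/2 : ℝ) : ℂ) - p 0 = ((ε/2 : ℝ) : ℂ) := by ring
          rw [this, Complex.norm_real, Real.norm_eq_abs, _root_.abs_of_pos (by linarith)]
          linarith
        obtain ⟨z, hz, hzeq⟩ := hw
        have h1 := hre0 z hz
        have h2 : (p z).re = (p 0).re + ε/2 := by
          rw [hzeq]; simp [Complex.add_re, Complex.ofReal_re]
        have h3 := hre0 0 (by simp)
        rw [h1] at h2
        rw [h3] at h2
        linarith
  intro z hz
  have h1 := hpzero z hz
  have h2 := hpid z hz
  rw [h1] at h2
  have h3 : 2 * (f z - z) = 0 := by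
    rcases div_eq_zero_iff.1 h2.symm with h | h
    · exact h
    · exact absurd h (mul_ne_zero (hfne z hz) (hzne z hz))
  have h5 : f z - z = 0 := (mul_eq_zero.1 h3).resolve_left two_ne_zero
  exact sub_eq_zero.1 h5


/-- There is exactly one `f ∈ 𝒮` with `f(z) = 1 + (z−1) + o(|z−1|³)` as `z →∠ 1`, namely the
identity; in particular any `f ∈ 𝒮` with `f(z) = z + o(|z−1|³)` equals `z` on the disk. -/
theorem bp_identity_rigidity :
    ((fun z : ℂ => z) ∈ SchurClass ∧
      NTLittleO (fun z : ℂ => z - (1 + (z - 1))) (fun z => (z - 1) ^ 3) 1) ∧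
    (∀ f ∈ SchurClass,
      NTLittleO (fun z => f z - (1 + (z - 1))) (fun z => (z - 1) ^ 3) 1 →
        Set.EqOn f (fun z => z) unitDisk) := by
  constructor
  · constructor
    · constructor
      · exact differentiable_id.differentiableOn
      · intro z hz
        have h1 : ‖z‖ < 1 := mem_ball_zero_iff.1 hz
        exact h1.le
    · intro κ hκ
      have h : (fun z : ℂ => z - (1 + (z - 1))) = fun _ => (0:ℂ) := funext fun z => by ring
      rw [h]
      exact Asymptotics.isLittleO_zero _ _
  · intro f hf hlo
    obtain ⟨hfd, hfb⟩ := hf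
    set x : ℕ → ℝ := fun n => 1 - ((n:ℝ)+2)⁻¹ with hxdef
    have hx0 : ∀ n, 0 ≤ x n := by
      intro n
      have h1 : ((n:ℝ)+2)⁻¹ ≤ 1 := by
        rw [inv_le_one_iff₀]
        right
        have := Nat.cast_nonneg (α := ℝ) n
        linarith
      simp only [hxdef]
      linarith
    have hx1 : ∀ n, x n < 1 := by
      intro n
      have h1 : 0 < ((n:ℝ)+2)⁻¹ := by positivity
      simp only [hxdef]
      linarith
    have hxt : Filter.Tendsto x Filter.atTop (nhds 1) := by
      have h1 : Filter.Tendsto (fun n : ℕ => ((n:ℝ)+2)) Filter.atTop Filter.atTop :=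
        tendsto_atTop_add_const_right _ 2 tendsto_natCast_atTop_atTop
      have h2 : Filter.Tendsto (fun n : ℕ => ((n:ℝ)+2)⁻¹) Filter.atTop (nhds 0) :=
        tendsto_inv_atTop_zero.comp h1
      have h3 := h2.const_sub (1:ℝ)
      simpa [hxdef] using h3
    have habsx : ∀ n, norm ((x n : ℝ) : ℂ) = x n := by
      intro n
      rw [Complex.norm_real, Real.norm_eq_abs]
      exact _root_.abs_of_nonneg (hx0 n)
    have hmemS : ∀ n, ((x n : ℝ) : ℂ) ∈ stolzAngle 1 2 := by
      intro n
      have hmu : ((x n : ℝ) : ℂ) ∈ unitDisk := by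
        show _ ∈ Metric.ball (0:ℂ) 1
        rw [mem_ball_zero_iff, habsx n]
        exact hx1 n
      refine Set.mem_sep hmu ?_
      rw [show ((x n : ℝ) : ℂ) - 1 = ((x n - 1 : ℝ) : ℂ) by push_cast; ring]
      rw [Complex.norm_real, Real.norm_eq_abs, abs_sub_comm, _root_.abs_of_nonneg (by linarith [hx1 n]), habsx n]
      linarith [hx1 n]
    have hxctS : Filter.Tendsto (fun n => ((x n : ℝ) : ℂ)) Filter.atTop
        (nhdsWithin 1 (stolzAngle 1 2)) := by
      apply tendsto_nhdsWithin_of_tendsto_nhds_of_eventually_within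
      · have := (Complex.continuous_ofReal.tendsto 1).comp hxt
        simpa [Function.comp_def] using this
      · exact Filter.Eventually.of_forall hmemS
    have hlo2 := hlo 2 (by norm_num)
    have heq : (fun z : ℂ => f z - (1 + (z - 1))) = fun z => f z - z := funext fun z => by ring
    rw [heq] at hlo2
    have T1 : Filter.Tendsto (fun n => (f ((x n : ℂ)) - (x n : ℂ)) / ((x n : ℂ) - 1) ^ 3)
        Filter.atTop (nhds 0) :=
      (hlo2.comp_tendsto hxctS).tendsto_div_nhds_zero
    intro z hz
    exact rigidity hfd hfb hx0 hx1 hxt T1 z hz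
end
end

section
/- Let n ≥ 2, t_0 ∈ 𝕋 and s_0, …, s_{2n−1} ∈ ℂ be such that |s_0| = 1 and the structured matrix ℙ^s_n is Hermitian, i.e., ℙ^s_n = (ℙ^s_n)^*. Then p^s_{ij} = conj(p^s_{ji}) for all integers i, j ≥ 1 with i + j ≤ 2n − 2. -/
open Complex Filter Matrix Metric Set Asymptotics
open scoped ComplexConjugate ComplexOrder Topology

noncomputable section

/-- Auxiliary: the inner sum in `pEntry`. -/
def Fc (t0 : ℂ) (s : ℕ → ℂ) (a r : ℕ) : ℂ :=
  ∑ l ∈ Finset.Icc 1 r, s (a + l - 1) * PsiEntry t0 l r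

lemma pEntry_eq_Fc (t0 : ℂ) (s : ℕ → ℂ) (i j : ℕ) :
    pEntry t0 s i j = ∑ r ∈ Finset.Icc 1 j, Fc t0 s i r * conj (s (j - r)) := rfl

lemma psi_succ (t0 : ℂ) (j l : ℕ) :
    PsiEntry t0 (j + 1) (l + 1) = (-1 : ℂ) ^ l * ((l.choose j : ℕ) : ℂ) * t0 ^ (l + j + 1) := by
  unfold PsiEntry
  split_ifs with h
  · have h1 : l + 1 - 1 = l := by omega
    have h2 : j + 1 - 1 = j := by omega
    have h3 : (l + 1) + (j + 1) - 1 = l + j + 1 := by omega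
    rw [h1, h2, h3]
  · rw [Nat.choose_eq_zero_of_lt (by omega)]
    simp

lemma psi_top (t0 : ℂ) (j l : ℕ) (h : l < j) : PsiEntry t0 j l = 0 := by
  unfold PsiEntry
  rw [if_neg (by omega)]

lemma coeff_cancel (t0 : ℂ) (ht : conj t0 * t0 = 1) (r l : ℕ) (hr : 1 ≤ r) (hl : 1 ≤ l) :
    (if 2 ≤ l then t0 * PsiEntry t0 (l - 1) r else 0)
      + conj t0 * PsiEntry t0 l (r + 1) + PsiEntry t0 l r = 0 := by
  obtain ⟨R, rfl⟩ : ∃ R, r = R + 1 := ⟨r - 1, by omega⟩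
  rcases Nat.lt_or_ge l 2 with h2 | h2
  · have hl1 : l = 1 := by omega
    subst hl1
    rw [if_neg (by omega)]
    have e1 : PsiEntry t0 1 (R + 1 + 1) = (-1 : ℂ) ^ (R + 1) * ((R+1).choose 0 : ℕ) * t0 ^ (R + 1 + 0 + 1) :=
      psi_succ t0 0 (R + 1)
    have e2 : PsiEntry t0 1 (R + 1) = (-1 : ℂ) ^ R * ((R).choose 0 : ℕ) * t0 ^ (R + 0 + 1) :=
      psi_succ t0 0 R
    rw [e1, e2, Nat.choose_zero_right, Nat.choose_zero_right]
    push_cast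
    linear_combination ((-1 : ℂ) ^ (R + 1) * t0 ^ (R + 1)) * ht
  · obtain ⟨L, rfl⟩ : ∃ L, l = L + 2 := ⟨l - 2, by omega⟩
    rw [if_pos (by omega)]
    have h1 : L + 2 - 1 = L + 1 := by omega
    rw [h1]
    have e1 : PsiEntry t0 (L + 1) (R + 1) = (-1 : ℂ) ^ R * ((R).choose L : ℕ) * t0 ^ (R + L + 1) :=
      psi_succ t0 L R
    have e2 : PsiEntry t0 (L + 2) (R + 2) = (-1 : ℂ) ^ (R + 1) * ((R+1).choose (L+1) : ℕ) * t0 ^ (R + 1 + (L + 1) + 1) :=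
      psi_succ t0 (L + 1) (R + 1)
    have e3 : PsiEntry t0 (L + 2) (R + 1) = (-1 : ℂ) ^ R * ((R).choose (L+1) : ℕ) * t0 ^ (R + (L + 1) + 1) :=
      psi_succ t0 (L + 1) R
    rw [show R + 1 + 1 = R + 2 from rfl] at e2
    rw [e1, e2, e3, Nat.choose_succ_succ]
    push_cast
    have hpow : R + 1 + (L + 1) + 1 = (R + (L + 1) + 1) + 1 := by omega
    rw [hpow, pow_succ]
    linear_combination ((-1 : ℂ) ^ (R + 1) * (((R.choose L : ℕ) : ℂ) + ((R.choose (L+1) : ℕ) : ℂ)) * t0 ^ (R + (L + 1) + 1)) * ht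

lemma icc_split (b : ℕ) (hb : 1 ≤ b) :
    Finset.Icc 1 (b + 1) = insert 1 (Finset.Icc 2 (b + 1)) := by
  ext x; simp [Finset.mem_Icc]; omega

lemma sum_shift (g : ℕ → ℂ) (b : ℕ) :
    ∑ r ∈ Finset.Icc 2 (b + 1), g r = ∑ r ∈ Finset.Icc 1 b, g (r + 1) := by
  rw [show (2 : ℕ) = 1 + 1 from rfl, show b + 1 = b + 1 from rfl,
    ← Finset.map_add_right_Icc 1 b 1, Finset.sum_map]
  rfl

lemma Frec (t0 : ℂ) (ht : conj t0 * t0 = 1) (s : ℕ → ℂ) (a r : ℕ) (hr : 1 ≤ r) :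
    t0 * Fc t0 s (a + 1) r + conj t0 * Fc t0 s a (r + 1) + Fc t0 s a r = 0 := by
  have h1 : t0 * Fc t0 s (a + 1) r
      = ∑ l ∈ Finset.Icc 1 (r + 1), s (a + l - 1) *
          (if 2 ≤ l then t0 * PsiEntry t0 (l - 1) r else 0) := by
    rw [icc_split r hr, Finset.sum_insert (by simp),
      sum_shift (fun l => s (a + l - 1) * (if 2 ≤ l then t0 * PsiEntry t0 (l - 1) r else 0)) r]
    rw [if_neg (by omega), mul_zero, zero_add]
    simp only [Fc, Finset.mul_sum]
    apply Finset.sum_congr rfl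
    intro l hl
    have hl1 : 1 ≤ l := (Finset.mem_Icc.mp hl).1
    rw [if_pos (by omega), show l + 1 - 1 = l from by omega,
      show a + (l + 1) - 1 = a + 1 + l - 1 from by omega]
    ring
  have h2 : conj t0 * Fc t0 s a (r + 1)
      = ∑ l ∈ Finset.Icc 1 (r + 1), s (a + l - 1) * (conj t0 * PsiEntry t0 l (r + 1)) := by
    simp only [Fc, Finset.mul_sum]; apply Finset.sum_congr rfl; intro l _; ring
  have h3 : Fc t0 s a r
      = ∑ l ∈ Finset.Icc 1 (r + 1), s (a + l - 1) * PsiEntry t0 l r := by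
    simp only [Fc]
    rw [Finset.sum_Icc_succ_top (by omega : 1 ≤ r + 1), psi_top t0 (r + 1) r (by omega)]
    simp
  rw [h1, h2, h3, ← Finset.sum_add_distrib, ← Finset.sum_add_distrib]
  apply Finset.sum_eq_zero
  intro l hl
  have hl1 : 1 ≤ l := (Finset.mem_Icc.mp hl).1
  rw [← mul_add, ← mul_add, coeff_cancel t0 ht r l hr hl1, mul_zero]

lemma key (t0 : ℂ) (ht : conj t0 * t0 = 1) (s : ℕ → ℂ) (a b : ℕ) (hb : 1 ≤ b) :
    t0 * pEntry t0 s (a + 1) b + conj t0 * pEntry t0 s a (b + 1) + pEntry t0 s a b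
      = s a * conj (s b) := by
  have hF1 : Fc t0 s a 1 = s a * t0 := by
    simp only [Fc, Finset.Icc_self, Finset.sum_singleton]
    have hpsi : PsiEntry t0 1 1 = t0 := by unfold PsiEntry; norm_num
    rw [hpsi, show a + 1 - 1 = a from by omega]
  have hsplit : pEntry t0 s a (b + 1)
      = s a * t0 * conj (s b)
        + ∑ r ∈ Finset.Icc 1 b, Fc t0 s a (r + 1) * conj (s (b - r)) := by
    rw [pEntry_eq_Fc, icc_split b hb, Finset.sum_insert (by simp),
      sum_shift (fun r => Fc t0 s a r * conj (s (b + 1 - r))) b]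
    rw [show b + 1 - 1 = b from by omega, hF1]
    congr 1
    apply Finset.sum_congr rfl
    intro r hr
    rw [show b + 1 - (r + 1) = b - r from by omega]
  have e1 : t0 * pEntry t0 s (a + 1) b
      = ∑ r ∈ Finset.Icc 1 b, t0 * (Fc t0 s (a + 1) r * conj (s (b - r))) := by
    rw [pEntry_eq_Fc, Finset.mul_sum]
  have e2 : conj t0 * pEntry t0 s a (b + 1)
      = conj t0 * (s a * t0 * conj (s b))
        + ∑ r ∈ Finset.Icc 1 b, conj t0 * (Fc t0 s a (r + 1) * conj (s (b - r))) := by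
    rw [hsplit, mul_add, Finset.mul_sum]
  rw [e1, e2, pEntry_eq_Fc t0 s a b]
  have hsum0 : ∑ r ∈ Finset.Icc 1 b, t0 * (Fc t0 s (a + 1) r * conj (s (b - r)))
      + ∑ r ∈ Finset.Icc 1 b, conj t0 * (Fc t0 s a (r + 1) * conj (s (b - r)))
      + ∑ r ∈ Finset.Icc 1 b, Fc t0 s a r * conj (s (b - r)) = 0 := by
    rw [← Finset.sum_add_distrib, ← Finset.sum_add_distrib]
    apply Finset.sum_eq_zero
    intro r hr
    have hr1 : 1 ≤ r := (Finset.mem_Icc.mp hr).1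
    have h := Frec t0 ht s a r hr1
    linear_combination conj (s (b - r)) * h
  linear_combination hsum0 + (s a * conj (s b)) * ht

/-- Auxiliary: the defect `p_{ab} - conj p_{ba}`. -/
def qE (t0 : ℂ) (s : ℕ → ℂ) (a b : ℕ) : ℂ :=
  pEntry t0 s a b - conj (pEntry t0 s b a)

lemma qrec (t0 : ℂ) (ht : conj t0 * t0 = 1) (s : ℕ → ℂ) (a b : ℕ) (ha : 1 ≤ a) (hb : 1 ≤ b) :
    qE t0 s (a + 1) b = -(conj t0 * (conj t0 * qE t0 s a (b + 1) + qE t0 s a b)) := by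
  have k1 := key t0 ht s a b hb
  have k2 := key t0 ht s b a ha
  have k2c := congrArg conj k2
  simp only [map_add, _root_.map_mul, Complex.conj_conj] at k2c
  simp only [qE]
  linear_combination (conj t0) * k1 - (conj t0) * k2c
    - (pEntry t0 s (a + 1) b - conj (pEntry t0 s b (a + 1))) * ht

/-- **Symmetry lemma.** If `|s_0| = 1` and `ℙ^s_n` is Hermitian, then
`p^s_{ij} = conj p^s_{ji}` for all `i, j ≥ 1` with `i + j ≤ 2n − 2`. -/
theorem symmetry_of_structured_entries (n : ℕ) (hn : 2 ≤ n) (t0 : ℂ)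
    (ht : ‖t0‖ = 1) (s : ℕ → ℂ) (h0 : ‖s 0‖ = 1)
    (hherm : Pmat t0 s n = (Pmat t0 s n)ᴴ) :
    ∀ i j : ℕ, 1 ≤ i → 1 ≤ j → i + j ≤ 2 * n - 2 →
      pEntry t0 s i j = conj (pEntry t0 s j i) := by
  have htt : conj t0 * t0 = 1 := by
    have h : ((‖t0‖ : ℝ) : ℂ) = 1 := by rw [ht]; norm_num
    calc conj t0 * t0 = ((‖t0‖ ^ 2 : ℝ) : ℂ) := by
          rw [← Complex.normSq_eq_norm_sq]; push_cast; rw [← Complex.normSq_eq_conj_mul_self]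
      _ = 1 := by rw [ht]; norm_num
  have hEntry : ∀ (i j : Fin n), pEntry t0 s ((i : ℕ) + 1) ((j : ℕ) + 1)
      = conj (pEntry t0 s ((j : ℕ) + 1) ((i : ℕ) + 1)) := by
    intro i j
    have h := congrFun (congrFun hherm i) j
    simpa [Pmat, Matrix.conjTranspose_apply] using h
  have hbase : ∀ a b, 1 ≤ a → a ≤ n → 1 ≤ b → b ≤ n → qE t0 s a b = 0 := by
    intro a b ha han hb hbn
    have h := hEntry ⟨a - 1, by omega⟩ ⟨b - 1, by omega⟩
    simp only at h
    rw [Nat.sub_add_cancel ha, Nat.sub_add_cancel hb] at h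
    rw [qE, h, sub_self]
  have hclaim : ∀ k b, 1 ≤ b → (n + k) + b ≤ 2 * n - 2 → qE t0 s (n + k) b = 0 := by
    intro k
    induction k with
    | zero =>
      intro b hb hsum
      exact hbase n b (by omega) le_rfl hb (by omega)
    | succ k ih =>
      intro b hb hsum
      rw [show n + (k + 1) = (n + k) + 1 from by omega,
        qrec t0 htt s (n + k) b (by omega) hb,
        ih (b + 1) (by omega) (by omega), ih b hb (by omega)]
      simp
  have hq0 : ∀ a b, 1 ≤ a → 1 ≤ b → a + b ≤ 2 * n - 2 → n ≤ a → qE t0 s a b = 0 := by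
    intro a b ha hb hab hna
    have h := hclaim (a - n) b hb (by omega)
    rwa [show n + (a - n) = a from by omega] at h
  intro i j hi hj hsum
  rcases le_or_gt i n with hin | hin
  · rcases le_or_gt j n with hjn | hjn
    · have h := hbase i j hi hin hj hjn
      rw [qE, sub_eq_zero] at h
      exact h
    · have h1 : qE t0 s j i = 0 := hq0 j i hj hi (by omega) (by omega)
      rw [qE, sub_eq_zero] at h1
      rw [h1, Complex.conj_conj]
  · have h1 : qE t0 s i j = 0 := hq0 i j hi hj hsum (by omega)
    rw [qE, sub_eq_zero] at h1
    exact h1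
end
end
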